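/- arXiv:2107.03549 — 2 statements merged into one kernel-verified Lean document; each statement's English description precedes it below -/
import Mathlib

section
/- For every integer k ≥ 2, the polynomial identity r_k(X) · q_k(X) = p_k(X^k) holds in ℤ[X]. -/
/-- The recursive triangle `P` from the paper: `P 0 0 = -1`, `P 0 (j+1) = 0`,
`P (i+1) 0 = -1`, and `P i j = 2 * P (i-1) j - P (i-1) (j-1)` for `i, j ≥ 1`. -/
def P : ℕ → ℕ → ℤ
  | 0, 0 => -1
  | 0, _ + 1 => 0
  | _ + 1, 0 => -1
  | i + 1, j + 1 => 2 * P i (j + 1) - P i j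

/-- The triangle `Q`, the backward difference of `P` in the row index. -/
def Q : ℕ → ℕ → ℤ
  | 0, _ => 0
  | i + 1, j => P (i + 1) j - P i j

lemma P_succ_succ (i j : ℕ) : P (i+1) (j+1) = 2 * P i (j+1) - P i j := rfl

lemma P_zero_right (i : ℕ) : P i 0 = -1 := by cases i <;> rfl

lemma P_eq_zero : ∀ {i j : ℕ}, i < j → P i j = 0 := by
  intro i
  induction i with
  | zero => intro j hj; obtain ⟨j', rfl⟩ : ∃ j', j = j' + 1 := ⟨j - 1, by omega⟩; rfl
  | succ a ih =>
    intro j hj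
    obtain ⟨j', rfl⟩ : ∃ j', j = j' + 1 := ⟨j - 1, by omega⟩
    rw [P_succ_succ, ih (by omega), ih (by omega)]
    ring

lemma Q_succ_def (i j : ℕ) : Q (i+1) j = P (i+1) j - P i j := rfl

lemma Q_zero_right (i : ℕ) : Q i 0 = 0 := by
  cases i with
  | zero => rfl
  | succ a => rw [Q_succ_def, P_zero_right, P_zero_right]; ring

lemma Q_eq_zero {i j : ℕ} (h : i < j) : Q i j = 0 := by
  cases i with
  | zero => rfl
  | succ a => rw [Q_succ_def, P_eq_zero h, P_eq_zero (by omega)]; ring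

lemma Q_rec (i j : ℕ) (hi : 1 ≤ i) : Q (i+1) (j+1) = 2 * Q i (j+1) - Q i j := by
  obtain ⟨a, rfl⟩ : ∃ a, i = a + 1 := ⟨i - 1, by omega⟩
  rw [Q_succ_def, Q_succ_def, Q_succ_def, P_succ_succ (a+1) j, P_succ_succ a j]
  ring

lemma Q_one_one : Q 1 1 = 1 := by decide

open Polynomial Finset

/-- Range-indexed form of the inner block polynomial. -/
noncomputable def cp (n j : ℕ) : ℤ[X] :=
  C (-(P (n+1) (n+1-j))) + ∑ s ∈ range (j+1), C (Q (n+1-s) (n+1-j)) * X^(s+1)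

lemma sum_Icc_range {M : Type*} [AddCommMonoid M] (a b : ℕ) (f : ℕ → M) :
    ∑ i ∈ Finset.Icc a b, f i = ∑ s ∈ Finset.range (b + 1 - a), f (a + s) := by
  apply Finset.sum_nbij' (fun i => i - a) (fun s => a + s) <;>
    simp_all [Finset.mem_Icc, Finset.mem_range] <;> omega

lemma icc_cp (n j : ℕ) (hj : j ≤ n + 1) :
    C (-P (n+1) (n+1-j)) + ∑ i ∈ Finset.Icc (n+1-j) (n+1), C (Q i (n+1-j)) * X^(n+2-i)
      = cp n j := by
  unfold cp
  congr 1
  rw [sum_Icc_range]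
  rw [show n + 1 + 1 - (n+1-j) = j + 1 by omega]
  rw [← Finset.sum_range_reflect (fun s => C (Q (n+1-s) (n+1-j)) * X^(s+1)) (j+1)]
  refine Finset.sum_congr rfl fun t ht => ?_
  simp only [Finset.mem_range] at ht
  have e1 : n + 1 - (j + 1 - 1 - t) = n + 1 - j + t := by omega
  have e2 : n + 2 - (n + 1 - j + t) = j + 1 - 1 - t + 1 := by omega
  rw [e1, e2]

lemma ctop (n : ℕ) : cp n (n+1) = 1 := by
  unfold cp
  rw [show n + 1 - (n+1) = 0 by omega, P_zero_right]
  rw [Finset.sum_eq_zero (fun s _ => by rw [Q_zero_right]; simp)]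
  simp

lemma claim1 (n : ℕ) : cp n 0 = C (-(P (n+2) (n+2))) * (X - 1) := by
  unfold cp
  rw [Finset.sum_range_one]
  rw [show n + 1 - 0 = n + 1 from rfl]
  have hq : Q (n+1) (n+1) = P (n+1) (n+1) := by
    rw [Q_succ_def, P_eq_zero (show n < n + 1 by omega)]; ring
  have hp : P (n+2) (n+2) = -P (n+1) (n+1) := by
    rw [P_succ_succ, P_eq_zero (show n + 1 < n + 2 by omega)]; ring
  rw [hq, hp]
  simp only [map_neg, neg_neg, pow_one]
  ring

lemma shift_sum (n j m : ℕ) :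
    ∑ s ∈ range (j+2), C (Q (n+2-s) m) * X^(s+1)
      = X * (∑ s ∈ range (j+1), C (Q (n+1-s) m) * X^(s+1)) + C (Q (n+2) m) * X := by
  rw [Finset.sum_range_succ' (fun s => C (Q (n+2-s) m) * X^(s+1)) (j+1), Finset.mul_sum]
  simp only [Nat.sub_zero, Nat.zero_add, pow_one]
  congr 1
  refine Finset.sum_congr rfl fun s _ => ?_
  rw [show n + 2 - (s+1) = n + 1 - s by omega]
  ring

lemma claim2 (n j : ℕ) (hj : j < n) :
    (X - 2) * cp n j + cp n (j+1) = C (-(P (n+2) (n+1-j))) * (X - 1) := by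
  set A := ∑ s ∈ range (j+1), C (Q (n+1-s) (n+1-j)) * X^(s+1) with hA
  set B := ∑ s ∈ range (j+2), C (Q (n+1-s) (n+1-(j+1))) * X^(s+1) with hB
  have h1 := shift_sum n j (n+1-j)
  have h2 : ∑ s ∈ range (j+2), C (Q (n+1-s) (n+1-j)) * X^(s+1) = A := by
    rw [Finset.sum_range_succ, hA]
    rw [Q_eq_zero (show n + 1 - (j+1) < n + 1 - j by omega)]
    simp
  have h3 : (∑ s ∈ range (j+2), C (Q (n+2-s) (n+1-j)) * X^(s+1))
      - 2 * (∑ s ∈ range (j+2), C (Q (n+1-s) (n+1-j)) * X^(s+1)) + B = 0 := by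
    rw [Finset.mul_sum, ← Finset.sum_sub_distrib, hB, ← Finset.sum_add_distrib]
    refine Finset.sum_eq_zero fun s hs => ?_
    simp only [Finset.mem_range] at hs
    rw [show n + 2 - s = (n + 1 - s) + 1 by omega,
        show n + 1 - j = (n + 1 - (j+1)) + 1 by omega,
        Q_rec (n+1-s) (n+1-(j+1)) (by omega)]
    simp only [map_sub, map_mul, map_ofNat]
    ring
  have hsum : (X - 2) * A + B = -(C (Q (n+2) (n+1-j)) * X) := by
    linear_combination -h1 + 2 * h2 + h3
  have hq : Q (n+2) (n+1-j) = P (n+1) (n+1-j) - P (n+1) (n+1-(j+1)) := by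
    rw [Q_succ_def, show n + 1 - j = (n + 1 - (j+1)) + 1 by omega,
        P_succ_succ]
    ring
  have hp : P (n+2) (n+1-j) = 2 * P (n+1) (n+1-j) - P (n+1) (n+1-(j+1)) := by
    rw [show n + 1 - j = (n + 1 - (j+1)) + 1 by omega, P_succ_succ]
  rw [hq] at hsum
  unfold cp
  rw [← hA, ← hB, hp]
  simp only [map_sub, map_neg, map_mul, map_ofNat] at hsum ⊢
  linear_combination hsum

lemma claim3 (n : ℕ) :
    (X - 2) * cp n n + 1 = C (-(P (n+2) 1)) * (X - 1) + X^(n+2) := by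
  have hnn : n + 1 - n = 1 := by omega
  set A := ∑ s ∈ range (n+1), C (Q (n+1-s) 1) * X^(s+1) with hA
  have h1 := shift_sum n n 1
  have h3 : (∑ s ∈ range (n+1), C (Q (n+2-s) 1) * X^(s+1)) - 2 * A = 0 := by
    rw [Finset.mul_sum, ← Finset.sum_sub_distrib]
    refine Finset.sum_eq_zero fun s hs => ?_
    simp only [Finset.mem_range] at hs
    rw [show n + 2 - s = (n + 1 - s) + 1 by omega,
        show Q (n+1-s+1) 1 = 2 * Q (n+1-s) (0+1) - Q (n+1-s) 0 from Q_rec (n+1-s) 0 (by omega), Q_zero_right]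
    simp only [Nat.zero_add, map_sub, map_mul, map_ofNat, map_zero]
    ring
  have htop : ∑ s ∈ range (n+2), C (Q (n+2-s) 1) * X^(s+1)
      = (∑ s ∈ range (n+1), C (Q (n+2-s) 1) * X^(s+1)) + X^(n+2) := by
    rw [Finset.sum_range_succ, show n + 2 - (n+1) = 1 by omega, Q_one_one]
    simp
  have hAX : (X - 2) * A = X^(n+2) - C (Q (n+2) 1) * X := by
    linear_combination -h1 + h3 + htop
  have hq : Q (n+2) 1 = P (n+1) 1 + 1 := by
    rw [Q_succ_def, show (1 : ℕ) = 0 + 1 from rfl, P_succ_succ, P_zero_right]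
    ring
  have hp : P (n+2) 1 = 2 * P (n+1) 1 + 1 := by
    rw [show (1 : ℕ) = 0 + 1 from rfl, P_succ_succ, P_zero_right]
    ring
  rw [hq] at hAX
  unfold cp
  rw [hnn, ← hA, hp]
  simp only [map_add, map_neg, map_mul, map_one, map_ofNat] at hAX ⊢
  linear_combination hAX

open Polynomial in
/-- Equation (2.6): `r_k(X) * q_k(X) = p_k(X^k)` in `ℤ[X]`, where
`r_k(X) = X^k - ∑_{i=1}^k X^(k-i)`, `p_k(X) = X^k - ∑_{i=1}^k P k i * X^(k-i)`, and
`q_k(X) = X^(k(k-1)) + ∑_{j=0}^{k-2} X^(kj) * (-P (k-1) (k-1-j)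
          + ∑_{i=k-1-j}^{k-1} Q i (k-1-j) * X^(k-i))`. -/
theorem rk_mul_qk_eq_pk_comp (k : ℕ) (hk : 2 ≤ k) :
    ((X : ℤ[X]) ^ k - ∑ i ∈ Finset.Icc 1 k, X ^ (k - i)) *
      ((X : ℤ[X]) ^ (k * (k - 1)) +
        ∑ j ∈ Finset.Icc 0 (k - 2), X ^ (k * j) *
          (C (-P (k - 1) (k - 1 - j)) +
            ∑ i ∈ Finset.Icc (k - 1 - j) (k - 1), C (Q i (k - 1 - j)) * X ^ (k - i))) =
    ((X : ℤ[X]) ^ k - ∑ i ∈ Finset.Icc 1 k, C (P k i) * X ^ (k - i)).comp (X ^ k) := by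
  obtain ⟨n, rfl⟩ : ∃ n, k = n + 2 := ⟨k - 2, by omega⟩
  clear hk
  rw [show n + 2 - 1 = n + 1 from rfl, show n + 2 - 2 = n from rfl]
  -- second factor equals the range-indexed block sum
  have hG : (X : ℤ[X]) ^ ((n+2) * (n+1)) +
      ∑ j ∈ Finset.Icc 0 n, X ^ ((n+2) * j) *
        (C (-P (n+1) (n+1-j)) +
          ∑ i ∈ Finset.Icc (n+1-j) (n+1), C (Q i (n+1-j)) * X ^ (n+2-i))
      = ∑ j ∈ range (n+2), X ^ ((n+2) * j) * cp n j := by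
    have hI : Finset.Icc 0 n = Finset.range (n+1) := by ext x; simp [Nat.lt_succ_iff]
    have h2 : ∑ j ∈ range (n+1), (X : ℤ[X]) ^ ((n+2) * j) *
        (C (-P (n+1) (n+1-j)) +
          ∑ i ∈ Finset.Icc (n+1-j) (n+1), C (Q i (n+1-j)) * X ^ (n+2-i))
        = ∑ j ∈ range (n+1), X ^ ((n+2) * j) * cp n j :=
      Finset.sum_congr rfl fun j hj => by
        rw [icc_cp n j (by simp only [Finset.mem_range] at hj; omega)]
    have h3 := Finset.sum_range_succ (fun j => (X : ℤ[X]) ^ ((n+2) * j) * cp n j) (n+1)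
    rw [hI, h2]
    rw [show Finset.range (n+2) = Finset.range (n+1+1) from rfl, h3, ctop, mul_one]
    ring
  -- geometric sum form of the first factor
  have hr : ∑ i ∈ Finset.Icc 1 (n+2), (X : ℤ[X]) ^ (n+2-i) = ∑ m ∈ range (n+2), X ^ m := by
    rw [sum_Icc_range, show n + 2 + 1 - 1 = n + 2 from rfl,
      ← Finset.sum_range_reflect (fun m => (X : ℤ[X]) ^ m) (n+2)]
    refine Finset.sum_congr rfl fun t ht => ?_
    simp only [Finset.mem_range] at ht
    congr 1
    omega
  -- compose the right-hand side
  have hcomp : ((X : ℤ[X]) ^ (n+2) - ∑ i ∈ Finset.Icc 1 (n+2), C (P (n+2) i) * X ^ (n+2-i)).comp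
      (X ^ (n+2)) = X ^ ((n+2) * (n+2)) -
        ∑ i ∈ Finset.Icc 1 (n+2), C (P (n+2) i) * X ^ ((n+2) * (n+2-i)) := by
    simp [sub_comp, Polynomial.sum_comp, mul_comp, C_comp, pow_comp, X_comp, ← pow_mul]
  have hri : ∑ i ∈ Finset.Icc 1 (n+2), C (P (n+2) i) * (X : ℤ[X]) ^ ((n+2) * (n+2-i))
      = ∑ m ∈ range (n+2), C (P (n+2) (n+2-m)) * X ^ ((n+2) * m) := by
    rw [sum_Icc_range, show n + 2 + 1 - 1 = n + 2 from rfl,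
      ← Finset.sum_range_reflect (fun m => C (P (n+2) (n+2-m)) * (X : ℤ[X]) ^ ((n+2) * m)) (n+2)]
    refine Finset.sum_congr rfl fun t ht => ?_
    simp only [Finset.mem_range] at ht
    rw [show n + 2 - (n + 2 - 1 - t) = 1 + t by omega, show n + 2 - (1 + t) = n + 2 - 1 - t by omega]
  have hsplit : ∑ m ∈ range (n+2), C (P (n+2) (n+2-m)) * (X : ℤ[X]) ^ ((n+2) * m)
      = C (P (n+2) (n+2)) + (∑ j ∈ range n, C (P (n+2) (n+1-j)) * X ^ ((n+2) * (j+1)))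
        + C (P (n+2) 1) * X ^ ((n+2) * (n+1)) := by
    have h1 := Finset.sum_range_succ' (fun m => C (P (n+2) (n+2-m)) * (X : ℤ[X]) ^ ((n+2) * m)) (n+1)
    rw [show Finset.range (n+2) = Finset.range (n+1+1) from rfl, h1, Finset.sum_range_succ]
    have e : ∀ j ∈ range n, C (P (n+2) (n+2-(j+1))) * (X : ℤ[X]) ^ ((n+2) * (j+1))
        = C (P (n+2) (n+1-j)) * X ^ ((n+2) * (j+1)) := fun j hj => by
      rw [show n + 2 - (j+1) = n + 1 - j by omega]
    rw [Finset.sum_congr rfl e, show n + 2 - (n+1) = 1 by omega]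
    simp only [Nat.sub_zero, Nat.mul_zero, pow_zero, mul_one]
    ring
  rw [hr, hG, hcomp, hri, hsplit]
  have hX1 : (X - 1 : ℤ[X]) ≠ 0 := by
    simpa using Polynomial.X_sub_C_ne_zero (1 : ℤ)
  apply mul_left_cancel₀ hX1
  have hr1 : (X - 1 : ℤ[X]) * (X ^ (n+2) - ∑ m ∈ range (n+2), X ^ m)
      = X ^ (n+3) - 2 * X ^ (n+2) + 1 := by
    linear_combination -geom_sum_mul (X : ℤ[X]) (n+2)
  have hD : ((X : ℤ[X]) ^ (n+3) - 2 * X ^ (n+2) + 1) * (∑ j ∈ range (n+2), X ^ ((n+2) * j) * cp n j)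
      = ∑ j ∈ range (n+2), (X ^ ((n+2) * (j+1)) * ((X - 2) * cp n j) + X ^ ((n+2) * j) * cp n j) := by
    rw [Finset.mul_sum]
    refine Finset.sum_congr rfl fun j hj => ?_
    rw [show (n+2) * (j+1) = (n+2) * j + (n+2) by ring, pow_add]
    ring
  have e1 : ∑ j ∈ range (n+2), (X : ℤ[X]) ^ ((n+2) * (j+1)) * ((X - 2) * cp n j)
      = (∑ j ∈ range (n+1), X ^ ((n+2) * (j+1)) * ((X - 2) * cp n j))
        + X ^ ((n+2) * (n+2)) * (X - 2) := by
    have h := Finset.sum_range_succ (fun j => (X : ℤ[X]) ^ ((n+2) * (j+1)) * ((X - 2) * cp n j)) (n+1)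
    rw [show Finset.range (n+2) = Finset.range (n+1+1) from rfl, h, ctop, mul_one,
      show n+1+1 = n+2 from rfl]
  have e2 : ∑ j ∈ range (n+2), (X : ℤ[X]) ^ ((n+2) * j) * cp n j
      = (∑ j ∈ range (n+1), X ^ ((n+2) * (j+1)) * cp n (j+1)) + cp n 0 := by
    have h := Finset.sum_range_succ' (fun j => (X : ℤ[X]) ^ ((n+2) * j) * cp n j) (n+1)
    rw [show Finset.range (n+2) = Finset.range (n+1+1) from rfl, h]
    simp
  have e3 : (∑ j ∈ range (n+1), (X : ℤ[X]) ^ ((n+2) * (j+1)) * ((X - 2) * cp n j))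
      + (∑ j ∈ range (n+1), (X : ℤ[X]) ^ ((n+2) * (j+1)) * cp n (j+1))
      = ∑ j ∈ range (n+1), X ^ ((n+2) * (j+1)) * ((X - 2) * cp n j + cp n (j+1)) := by
    rw [← Finset.sum_add_distrib]
    exact Finset.sum_congr rfl fun j _ => by ring
  have e4 : ∑ j ∈ range (n+1), (X : ℤ[X]) ^ ((n+2) * (j+1)) * ((X - 2) * cp n j + cp n (j+1))
      = (∑ j ∈ range n, X ^ ((n+2) * (j+1)) * (-(C (P (n+2) (n+1-j))) * (X - 1)))
        + X ^ ((n+2) * (n+1)) * (-(C (P (n+2) 1)) * (X - 1) + X ^ (n+2)) := by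
    rw [Finset.sum_range_succ, ctop n, claim3 n]
    simp only [map_neg]
    congr 1
    refine Finset.sum_congr rfl fun j hj => ?_
    rw [claim2 n j (Finset.mem_range.mp hj)]
    simp only [map_neg]
  have e7 : ∑ j ∈ range n, (X : ℤ[X]) ^ ((n+2) * (j+1)) * (-(C (P (n+2) (n+1-j))) * (X - 1))
      = -((X - 1) * ∑ j ∈ range n, C (P (n+2) (n+1-j)) * X ^ ((n+2) * (j+1))) := by
    rw [Finset.mul_sum, ← Finset.sum_neg_distrib]
    exact Finset.sum_congr rfl fun j _ => by ring
  have hc1 : cp n 0 = -(C (P (n+2) (n+2))) * (X - 1) := by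
    rw [claim1 n, map_neg]
  rw [← mul_assoc, hr1, hD, Finset.sum_add_distrib, e1, e2, hc1]
  linear_combination e3 + e4 + e7
end

section
/- For every integer k ≥ 2 and every nonzero real number x, x^k · r_k(2 - 1/x) = p_k(x), where r_k and p_k are evaluated at real arguments. -/
lemma P_zero_of_lt : ∀ i j : ℕ, i < j → P i j = 0 := by
  intro i
  induction i with
  | zero =>
    intro j hj
    obtain ⟨m, rfl⟩ : ∃ m, j = m + 1 := ⟨j - 1, by omega⟩
    rfl
  | succ i ih =>
    intro j hj
    obtain ⟨m, rfl⟩ : ∃ m, j = m + 1 := ⟨j - 1, by omega⟩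
    show 2 * P i (m + 1) - P i m = 0
    rw [ih (m + 1) (by omega), ih m (by omega)]
    ring

lemma P_zero_col : ∀ k : ℕ, P k 0 = -1 := by
  intro k; cases k <;> rfl

lemma key (k : ℕ) (y : ℝ) :
    (2 * y - 1) ^ k - ∑ j ∈ Finset.range k, y ^ (j + 1) * (2 * y - 1) ^ (k - (j + 1))
      = y ^ k - ∑ j ∈ Finset.range k, (P k (j + 1) : ℝ) * y ^ (k - (j + 1)) := by
  induction k with
  | zero => simp
  | succ k ih =>
    have h1 : ∑ j ∈ Finset.range (k + 1), y ^ (j + 1) * (2 * y - 1) ^ (k + 1 - (j + 1))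
        = (2 * y - 1) * ∑ j ∈ Finset.range k, y ^ (j + 1) * (2 * y - 1) ^ (k - (j + 1))
          + y ^ (k + 1) := by
      rw [Finset.sum_range_succ, Finset.mul_sum]
      simp only [Nat.sub_self, pow_zero, mul_one, Nat.add_sub_cancel]
      congr 1
      apply Finset.sum_congr rfl
      intro j hj
      have hjk : j < k := Finset.mem_range.mp hj
      have : k + 1 - (j + 1) = (k - (j + 1)) + 1 := by omega
      rw [this, pow_succ]
      ring
    have h2 : ∑ j ∈ Finset.range (k + 1), (P (k + 1) (j + 1) : ℝ) * y ^ (k + 1 - (j + 1))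
        = 2 * y * ∑ j ∈ Finset.range k, (P k (j + 1) : ℝ) * y ^ (k - (j + 1))
          + y ^ k - ∑ j ∈ Finset.range k, (P k (j + 1) : ℝ) * y ^ (k - (j + 1)) := by
      have hterm : ∀ j ∈ Finset.range (k + 1),
          (P (k + 1) (j + 1) : ℝ) * y ^ (k + 1 - (j + 1))
            = 2 * ((P k (j + 1) : ℝ) * y ^ (k - j)) - (P k j : ℝ) * y ^ (k - j) := by
        intro j hj
        show ((2 * P k (j + 1) - P k j : ℤ) : ℝ) * y ^ (k + 1 - (j + 1)) = _
        have : k + 1 - (j + 1) = k - j := by omega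
        rw [this]
        push_cast
        ring
      rw [Finset.sum_congr rfl hterm, Finset.sum_sub_distrib]
      have hA : ∑ j ∈ Finset.range (k + 1), 2 * ((P k (j + 1) : ℝ) * y ^ (k - j))
          = 2 * y * ∑ j ∈ Finset.range k, (P k (j + 1) : ℝ) * y ^ (k - (j + 1)) := by
        rw [Finset.sum_range_succ, P_zero_of_lt k (k + 1) (by omega), Finset.mul_sum]
        simp only [Int.cast_zero, zero_mul, mul_zero, add_zero]
        apply Finset.sum_congr rfl
        intro j hj
        have hjk : j < k := Finset.mem_range.mp hj
        have : k - j = (k - (j + 1)) + 1 := by omega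
        rw [this, pow_succ]
        ring
      have hB : ∑ j ∈ Finset.range (k + 1), (P k j : ℝ) * y ^ (k - j)
          = ∑ j ∈ Finset.range k, (P k (j + 1) : ℝ) * y ^ (k - (j + 1)) - y ^ k := by
        rw [Finset.sum_range_succ']
        rw [P_zero_col k]
        simp only [Nat.sub_zero]
        push_cast
        ring
      rw [hA, hB]
      ring
    rw [h1, h2]
    linear_combination (2 * y - 1) * ih

open Polynomial in
/-- For `k ≥ 2` and any nonzero real `x`, `x^k * r_k(2 - 1/x) = p_k(x)`, where
`r_k(X) = X^k - ∑_{i=1}^k X^(k-i)` and `p_k(X) = X^k - ∑_{i=1}^k P k i * X^(k-i)`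
are evaluated at real arguments. -/
theorem pow_mul_rk_eval_eq_pk (k : ℕ) (hk : 2 ≤ k) (x : ℝ) (hx : x ≠ 0) :
    x ^ k * aeval (2 - 1 / x) ((X : ℤ[X]) ^ k - ∑ i ∈ Finset.Icc 1 k, X ^ (k - i)) =
      aeval x ((X : ℤ[X]) ^ k - ∑ i ∈ Finset.Icc 1 k, C (P k i) * X ^ (k - i)) := by
  have hxy : x * (2 - 1 / x) = 2 * x - 1 := by field_simp
  simp only [map_sub, map_sum, map_pow, map_mul, aeval_X, aeval_C, eq_intCast, map_intCast]
  have hIccL : ∑ i ∈ Finset.Icc 1 k, (2 - 1 / x) ^ (k - i)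
      = ∑ j ∈ Finset.range k, (2 - 1 / x) ^ (k - (j + 1)) := by
    rw [← Finset.Ico_add_one_right_eq_Icc, Finset.sum_Ico_eq_sum_range]
    simp [add_comm 1]
  have hIccR : ∑ i ∈ Finset.Icc 1 k, (P k i : ℝ) * x ^ (k - i)
      = ∑ j ∈ Finset.range k, (P k (j + 1) : ℝ) * x ^ (k - (j + 1)) := by
    rw [← Finset.Ico_add_one_right_eq_Icc, Finset.sum_Ico_eq_sum_range]
    simp [add_comm 1]
  rw [hIccL, hIccR, mul_sub, Finset.mul_sum]
  have hL1 : x ^ k * (2 - 1 / x) ^ k = (2 * x - 1) ^ k := by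
    rw [← mul_pow, hxy]
  have hL2 : ∀ j ∈ Finset.range k, x ^ k * (2 - 1 / x) ^ (k - (j + 1))
      = x ^ (j + 1) * (2 * x - 1) ^ (k - (j + 1)) := by
    intro j hj
    have hjk : j < k := Finset.mem_range.mp hj
    have hxk : x ^ k = x ^ (j + 1) * x ^ (k - (j + 1)) := by
      rw [← pow_add]; congr 1; omega
    rw [hxk, mul_assoc, ← mul_pow, hxy]
  rw [hL1, Finset.sum_congr rfl hL2]
  exact key k x
end
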